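/- If T is a tree and x is a leaf vertex of T, then for any odd positive integer k, the k-th bipartite power of T minus x equals the k-th bipartite power of (T minus x), i.e., (T - {x})^[k] = T^[k] - {x}. -/

import Mathlib

open SimpleGraph Set

/-- `f` given by endpoint functions `a`, `b` is an interval representation of `I`. -/
def IsIntervalRep {V : Type*} (I : SimpleGraph V) (a b : V → ℝ) : Prop :=
  (∀ v, a v ≤ b v) ∧
    ∀ u v, I.Adj u v ↔ u ≠ v ∧ (Set.Icc (a u) (b u) ∩ Set.Icc (a v) (b v)).Nonempty

/-- `I` is an interval graph. -/
def IsIntervalGraph {V : Type*} (I : SimpleGraph V) : Prop :=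
  ∃ a b : V → ℝ, IsIntervalRep I a b

/-- `G` is the intersection graph of axis-parallel `k`-dimensional boxes. -/
def IsBoxRep {V : Type*} (G : SimpleGraph V) (k : ℕ) : Prop :=
  ∃ lo hi : V → Fin k → ℝ, (∀ v i, lo v i ≤ hi v i) ∧
    ∀ u v, G.Adj u v ↔ u ≠ v ∧
      ∀ i, (Set.Icc (lo u i) (hi u i) ∩ Set.Icc (lo v i) (hi v i)).Nonempty

/-- The boxicity of a graph: the least `k` such that `G` is an intersection graph of
axis-parallel `k`-dimensional boxes. -/
noncomputable def boxicity {V : Type*} (G : SimpleGraph V) : ℕ :=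
  sInf {k | IsBoxRep G k}

/-- The `k`-th bipartite power of `G`: join vertices at odd distance at most `k`. -/
def bipartitePower {V : Type*} (G : SimpleGraph V) (k : ℕ) : SimpleGraph V :=
  SimpleGraph.fromRel (fun u v => Odd (G.dist u v) ∧ G.dist u v ≤ k)

/-- Add to `G` all edges between distinct vertices of `B`. -/
def addCliqueOn {V : Type*} (G : SimpleGraph V) (B : Set V) : SimpleGraph V :=
  SimpleGraph.fromRel (fun u v => G.Adj u v ∨ (u ∈ B ∧ v ∈ B))

/-- `{A, B}` is a bipartition of `G`. -/
def IsBipartitionOf {V : Type*} (G : SimpleGraph V) (A B : Set V) : Prop :=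
  Disjoint A B ∧ A ∪ B = Set.univ ∧ ∀ u v, G.Adj u v → (u ∈ A ↔ v ∈ B)

/-- `G` has no induced cycle of length greater than `m`. -/
def HasNoInducedCycleGT {V : Type*} (G : SimpleGraph V) (m : ℕ) : Prop :=
  ∀ n : ℕ, m < n → IsEmpty (SimpleGraph.cycleGraph n ↪g G)

/-- Chordal bipartite graphs: bipartite with no induced cycle of length > 4. -/
def ChordalBipartite {V : Type*} (G : SimpleGraph V) : Prop :=
  (∃ A B : Set V, IsBipartitionOf G A B) ∧ HasNoInducedCycleGT G 4

/-- The closed neighbourhood `N[v]`. -/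
def closedNbhd {V : Type*} (G : SimpleGraph V) (v : V) : Set V :=
  insert v (G.neighborSet v)

/-- Two vertices are compatible if one closed neighbourhood contains the other. -/
def Compatible {V : Type*} (G : SimpleGraph V) (u v : V) : Prop :=
  closedNbhd G u ⊆ closedNbhd G v ∨ closedNbhd G v ⊆ closedNbhd G u

/-- A vertex is simple if all pairs in its closed neighbourhood are compatible. -/
def IsSimpleVertex {V : Type*} (G : SimpleGraph V) (v : V) : Prop :=
  ∀ x ∈ closedNbhd G v, ∀ y ∈ closedNbhd G v, Compatible G x y


lemma lift_walk {V : Type*} (G : SimpleGraph V) (s : Set V) :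
    ∀ {u v : V} (p : G.Walk u v) (hu : u ∈ s) (hv : v ∈ s),
      (∀ w ∈ p.support, w ∈ s) →
      ∃ q : (G.induce s).Walk ⟨u, hu⟩ ⟨v, hv⟩, q.length = p.length
  | _, _, .nil, _, _, _ => ⟨.nil, rfl⟩
  | _, _, @SimpleGraph.Walk.cons _ _ u a v h p, hu, hv, hs => by
    have ha : a ∈ s := hs a (by simp)
    obtain ⟨q, hq⟩ := lift_walk G s p ha hv (fun w hw => hs w (by simp [hw]))
    exact ⟨.cons (by simpa using h) q, by simp [hq]⟩

lemma dist_induce {V : Type*} {T : SimpleGraph V} (hT : T.IsTree) {x : V}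
    (hleaf : ∃! y, T.Adj x y) (u v : {y | y ≠ x}) :
    (T.induce {y | y ≠ x}).dist u v = T.dist u v := by
  obtain ⟨p, hp, hl⟩ := hT.isConnected.exists_path_of_dist u.1 v.1
  have hsupp : ∀ w ∈ p.support, w ∈ {y | y ≠ x} := by
    classical
    intro w hw
    simp only [Set.mem_setOf_eq]
    intro hwx
    subst hwx
    -- x is an internal vertex of the path p
    have hq := p.take_spec hw
    set q := p.takeUntil w hw with hqdef
    set r := p.dropUntil w hw with hrdef
    obtain ⟨a, ha, q', hq'⟩ := Walk.exists_eq_cons_of_ne (Ne.symm u.2) q.reverse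
    obtain ⟨b, hb, r', hr'⟩ := Walk.exists_eq_cons_of_ne (fun h => v.2 h.symm) r
    obtain ⟨y, hy, hyu⟩ := hleaf
    have hab : a = b := (hyu a ha).trans (hyu b hb).symm
    have haq : a ∈ q.support := by
      have : a ∈ q.reverse.support := by rw [hq']; simp
      simpa [Walk.support_reverse] using this
    have hbr : b ∈ r.support.tail := by rw [hr']; simp
    have hnd := hp.support_nodup
    rw [← hq, Walk.support_append, List.nodup_append] at hnd
    exact hnd.2.2 a haq b hbr hab
  obtain ⟨q, hqlen⟩ := lift_walk T {y | y ≠ x} p u.2 v.2 hsupp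
  have h1 : (T.induce {y | y ≠ x}).dist u v ≤ T.dist u.1 v.1 := by
    calc (T.induce {y | y ≠ x}).dist u v ≤ q.length := dist_le q
    _ = T.dist u.1 v.1 := by rw [hqlen, hl]
  have h2 : T.dist u.1 v.1 ≤ (T.induce {y | y ≠ x}).dist u v := by
    obtain ⟨w, hw⟩ := (Reachable.exists_walk_length_eq_dist ⟨q⟩ :
      ∃ w : (T.induce {y | y ≠ x}).Walk u v, w.length = _)
    calc T.dist u.1 v.1 ≤ (w.map (Embedding.induce _).toHom).length := dist_le _
    _ = (T.induce {y | y ≠ x}).dist u v := by rw [Walk.length_map, hw]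
  omega

theorem stmt0 {V : Type*} (T : SimpleGraph V) (hT : T.IsTree) (x : V)
    (hleaf : ∃! y, T.Adj x y) (k : ℕ) (hk : Odd k) (hk0 : 0 < k) :
    bipartitePower (T.induce {y | y ≠ x}) k
      = (bipartitePower T k).induce {y | y ≠ x} := by
  ext u v
  simp only [bipartitePower, fromRel_adj, comap_adj, Function.Embedding.coe_subtype,
    dist_induce hT hleaf, ne_eq, Subtype.ext_iff]
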